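/- For every d ≥ 3, the subgroup G = ⟨b_1, ..., b_{d-1}⟩ of the Hanoi Towers group is self-similar, fractal and level transitive. -/

import Mathlib

open Equiv

namespace TreeFract

variable {X : Type*}

/-- The automorphism group of the rooted `d`-adic tree with vertex set the free
monoid `List X`: permutations of the vertex set fixing the root and sending
children of a vertex to children of its image (this is exactly incidence
preservation for the rooted tree). -/
def AutT (X : Type*) : Subgroup (Equiv.Perm (List X)) where
  carrier := {g | g [] = [] ∧ ∀ (u : List X) (x : X), ∃ y : X, g (u ++ [x]) = g u ++ [y]}
  one_mem' := ⟨rfl, fun _ x => ⟨x, rfl⟩⟩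
  mul_mem' := by
    rintro f g ⟨hf1, hf2⟩ ⟨hg1, hg2⟩
    refine ⟨?_, fun u x => ?_⟩
    · show f (g []) = []
      rw [hg1, hf1]
    · obtain ⟨y, hy⟩ := hg2 u x
      obtain ⟨z, hz⟩ := hf2 (g u) y
      exact ⟨z, by show f (g (u ++ [x])) = f (g u) ++ [z]; rw [hy, hz]⟩
  inv_mem' := by
    rintro g ⟨hg1, hg2⟩
    have hinj := g.injective
    refine ⟨?_, fun u x => ?_⟩
    · apply hinj
      show g (g⁻¹ []) = g []
      rw [(show ∀ (e : Equiv.Perm (List X)) (x : List X), e (e⁻¹ x) = x from fun e x => Equiv.apply_symm_apply e x), hg1]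
    · have hne : g⁻¹ (u ++ [x]) ≠ [] := by
        intro h
        have h2 : u ++ [x] = g [] := by
          conv_lhs => rw [← (show ∀ (e : Equiv.Perm (List X)) (x : List X), e (e⁻¹ x) = x from fun e x => Equiv.apply_symm_apply e x) g (u ++ [x]), h]
        rw [hg1] at h2
        simp at h2
      obtain ⟨y, hy⟩ : ∃ y, g⁻¹ (u ++ [x]) = (g⁻¹ (u ++ [x])).dropLast ++ [y] :=
        ⟨(g⁻¹ (u ++ [x])).getLast hne, (List.dropLast_append_getLast hne).symm⟩
      obtain ⟨z, hz⟩ := hg2 ((g⁻¹ (u ++ [x])).dropLast) y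
      have happ : g ((g⁻¹ (u ++ [x])).dropLast) ++ [z] = u ++ [x] := by
        rw [← hz, ← hy, (show ∀ (e : Equiv.Perm (List X)) (x : List X), e (e⁻¹ x) = x from fun e x => Equiv.apply_symm_apply e x)]
      have h2 : g ((g⁻¹ (u ++ [x])).dropLast) = u ∧ ([z] : List X) = [x] :=
        List.append_inj' happ rfl
      refine ⟨y, ?_⟩
      rw [hy]
      congr 1
      apply hinj
      rw [(show ∀ (e : Equiv.Perm (List X)) (x : List X), e (e⁻¹ x) = x from fun e x => Equiv.apply_symm_apply e x), h2.1]

/-- The underlying function of the section of `g` at the vertex `u`. -/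
def sectFun (g : Equiv.Perm (List X)) (u : List X) : List X → List X :=
  fun v => (g (u ++ v)).drop (g u).length

open scoped Classical in
/-- The section `g_u` of a tree automorphism `g` at a vertex `u`, i.e. the unique
automorphism with `g (u ++ v) = g u ++ g_u v` for all `v`.  (By convention it is
the identity for permutations which are not tree automorphisms.) -/
noncomputable def sect (g : Equiv.Perm (List X)) (u : List X) : Equiv.Perm (List X) :=
  if h : Function.Bijective (sectFun g u) then Equiv.ofBijective _ h else 1

/-- The underlying function of the label of `g` at the vertex `u`. -/
def labelFun (g : Equiv.Perm (List X)) (u : List X) : X → X :=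
  fun x => (g (u ++ [x])).getLastD x

open scoped Classical in
/-- The label `g_(u)` of a tree automorphism `g` at a vertex `u`: the permutation
of `X` with `g (u ++ [x]) = g u ++ [g_(u) x]`.  (By convention it is the identity
for permutations which are not tree automorphisms.) -/
noncomputable def label (g : Equiv.Perm (List X)) (u : List X) : Equiv.Perm X :=
  if h : Function.Bijective (labelFun g u) then Equiv.ofBijective _ h else 1

/-- The stabilizer `st_G(u)` of the vertex `u` in `G`. -/
def stV (G : Subgroup (Equiv.Perm (List X))) (u : List X) : Subgroup (Equiv.Perm (List X)) where
  carrier := {g | g ∈ G ∧ g u = u}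
  one_mem' := ⟨one_mem G, rfl⟩
  mul_mem' := by
    rintro f g ⟨hf, hf2⟩ ⟨hg, hg2⟩
    exact ⟨mul_mem hf hg, by show f (g u) = u; rw [hg2, hf2]⟩
  inv_mem' := by
    rintro g ⟨hg, hg2⟩
    refine ⟨inv_mem hg, ?_⟩
    apply g.injective
    show g (g⁻¹ u) = g u
    rw [(show ∀ (e : Equiv.Perm (List X)) (x : List X), e (e⁻¹ x) = x from fun e x => Equiv.apply_symm_apply e x), hg2]

/-- The stabilizer `st_G(L_n)` of the `n`-th level in `G`. -/
def stL (G : Subgroup (Equiv.Perm (List X))) (n : ℕ) : Subgroup (Equiv.Perm (List X)) where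
  carrier := {g | g ∈ G ∧ ∀ u : List X, u.length = n → g u = u}
  one_mem' := ⟨one_mem G, fun _ _ => rfl⟩
  mul_mem' := by
    rintro f g ⟨hf, hf2⟩ ⟨hg, hg2⟩
    exact ⟨mul_mem hf hg, fun u hu => by show f (g u) = u; rw [hg2 u hu, hf2 u hu]⟩
  inv_mem' := by
    rintro g ⟨hg, hg2⟩
    refine ⟨inv_mem hg, fun u hu => ?_⟩
    apply g.injective
    show g (g⁻¹ u) = g u
    rw [(show ∀ (e : Equiv.Perm (List X)) (x : List X), e (e⁻¹ x) = x from fun e x => Equiv.apply_symm_apply e x), hg2 u hu]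

/-- `G` is self-similar: sections of elements of `G` lie in `G`. -/
def SelfSimilar (G : Subgroup (Equiv.Perm (List X))) : Prop :=
  ∀ g ∈ G, ∀ u : List X, sect g u ∈ G

/-- `G` acts transitively on the first level of the tree. -/
def FirstLevelTransitive (G : Subgroup (Equiv.Perm (List X))) : Prop :=
  ∀ x y : X, ∃ g ∈ G, g [x] = [y]

/-- `G` is level transitive: it acts transitively on every level of the tree. -/
def LevelTransitive (G : Subgroup (Equiv.Perm (List X))) : Prop :=
  ∀ (n : ℕ) (u v : List X), u.length = n → v.length = n → ∃ g ∈ G, g u = v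

/-- `G` is fractal: `ψ_u(st_G(u)) = G` for every vertex `u`. -/
def Fractal (G : Subgroup (Equiv.Perm (List X))) : Prop :=
  ∀ u : List X,
    (fun g => sect g u) '' (stV G u : Set (Equiv.Perm (List X))) = (G : Set (Equiv.Perm (List X)))

/-- `G` is strongly fractal: `ψ_x(st_G(L_1)) = G` for every first-level vertex `x`. -/
def StronglyFractal (G : Subgroup (Equiv.Perm (List X))) : Prop :=
  ∀ x : X,
    (fun g => sect g [x]) '' (stL G 1 : Set (Equiv.Perm (List X))) = (G : Set (Equiv.Perm (List X)))

/-- `G` is super strongly fractal: `ψ_u(st_G(L_n)) = G` for every `n` and every `u ∈ L_n`. -/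
def SuperStronglyFractal (G : Subgroup (Equiv.Perm (List X))) : Prop :=
  ∀ (n : ℕ) (u : List X), u.length = n →
    (fun g => sect g u) '' (stL G n : Set (Equiv.Perm (List X))) = (G : Set (Equiv.Perm (List X)))

/-- The normal closure `⟨S⟩^G` of a subset `S ⊆ G` in the subgroup `G`, realized as a
subgroup of the ambient group: the subgroup generated by all `G`-conjugates of `S`. -/
def normalClosureIn (G : Subgroup (Equiv.Perm (List X))) (S : Set (Equiv.Perm (List X))) :
    Subgroup (Equiv.Perm (List X)) :=
  Subgroup.closure {t | ∃ g ∈ G, ∃ s ∈ S, t = g * s * g⁻¹}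

end TreeFract
namespace TreeFract

/-! ### The Hanoi towers generators -/

section Hanoi

variable {d : ℕ}

/-- The underlying function of the automorphism `a_{ij}` of the Hanoi Towers group:
it swaps the first occurrence of `i` or `j` in a word. -/
def hanoiFun (i j : Fin d) : List (Fin d) → List (Fin d)
  | [] => []
  | x :: w => if x = i then j :: w else if x = j then i :: w else x :: hanoiFun i j w

lemma hanoiFun_invol (i j : Fin d) : ∀ w, hanoiFun i j (hanoiFun i j w) = w
  | [] => rfl
  | x :: w => by
    by_cases h1 : x = i
    · subst h1
      by_cases h2 : j = x
      · simp [hanoiFun, h2]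
      · simp [hanoiFun, h2]
    · by_cases h2 : x = j
      · subst h2
        simp [hanoiFun, h1]
      · simp [hanoiFun, h1, h2, hanoiFun_invol i j w]

/-- The automorphism `a_{ij}` of the `d`-adic tree: its label at the root is the
transposition `(x_i x_j)`, its sections at the first-level vertices `x_i` and `x_j`
are trivial and all its other first-level sections equal `a_{ij}` again. -/
def hanoiA (i j : Fin d) : Equiv.Perm (List (Fin d)) :=
  ⟨hanoiFun i j, hanoiFun i j, hanoiFun_invol i j, hanoiFun_invol i j⟩

end Hanoi

/-- The generator `b_i = a_{i,i+1}` (here `i` runs through `0, …, d-2`,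
corresponding to the paper's `b_1, …, b_{d-1}`). -/
def hanoiB (d : ℕ) (i : ℕ) (h : i + 1 < d) : Equiv.Perm (List (Fin d)) :=
  hanoiA ⟨i, Nat.lt_of_succ_lt h⟩ ⟨i + 1, h⟩

/-- The subgroup `G = ⟨b_1, …, b_{d-1}⟩` of the Hanoi Towers group. -/
def hanoiGroup (d : ℕ) : Subgroup (Equiv.Perm (List (Fin d))) :=
  Subgroup.closure {g | ∃ (i : ℕ) (h : i + 1 < d), g = hanoiB d i h}

/-! ### GGS groups (and the rooted automorphism `a`) -/

section GGS

variable {p : ℕ}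

/-- The function adding `m` to the first letter of a word over `ZMod p`. -/
def rotFun (m : ZMod p) : List (ZMod p) → List (ZMod p)
  | [] => []
  | x :: w => (x + m) :: w

/-- The rooted automorphism of the `p`-adic tree whose label at the root is the
`p`-cycle `x ↦ x + m`; for `m = 1` this is the generator `a` of a GGS-group
(identifying `x_i` with `i mod p`). -/
def rotPerm (m : ZMod p) : Equiv.Perm (List (ZMod p)) :=
  ⟨rotFun m, rotFun (-m),
    by intro w; cases w <;> simp [rotFun],
    by intro w; cases w <;> simp [rotFun]⟩

/-- The underlying function of the GGS generator `b` with defining vector `e`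
(the value `e 0` is irrelevant; `e i` for `i ≠ 0` are the coordinates
`e_1, …, e_{p-1}`): `b` fixes the first level, its section at `x_i` is
`a^{e_i}` for `i = 1, …, p-1` and its section at `x_p` (identified with `0`)
is `b` again. -/
def ggsFun (e : ZMod p → ZMod p) : List (ZMod p) → List (ZMod p)
  | [] => []
  | x :: w => if x = 0 then x :: ggsFun e w else x :: rotFun (e x) w

lemma ggsFun_inv (e : ZMod p → ZMod p) : ∀ w, ggsFun (fun i => -(e i)) (ggsFun e w) = w
  | [] => rfl
  | x :: w => by
    by_cases h : x = 0
    · simp only [ggsFun, if_pos h]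
      rw [ggsFun_inv e w]
    · simp only [ggsFun, if_neg h]
      cases w <;> simp [rotFun]

/-- The GGS generator `b` with defining vector `e`, as a tree automorphism. -/
def ggsB (e : ZMod p → ZMod p) : Equiv.Perm (List (ZMod p)) :=
  ⟨ggsFun e, ggsFun (fun i => -(e i)), ggsFun_inv e, by
    intro w
    have h := ggsFun_inv (fun i => -(e i)) w
    simpa using h⟩

end GGS

/-- The GGS-group `G = ⟨a, b⟩` over the `p`-adic tree with defining vector `e`. -/
def ggsGroup (p : ℕ) (e : ZMod p → ZMod p) : Subgroup (Equiv.Perm (List (ZMod p))) :=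
  Subgroup.closure {rotPerm 1, ggsB e}

/-! ### The first Grigorchuk group -/

/-- The three directed generators `b, c, d` (for `k % 3 = 0, 1, 2` respectively) of the
first Grigorchuk group, defined by the mutual recursion
`b = (a, c)`, `c = (a, d)`, `d = (1, b)` (identifying `x_1` with `0` and `x_2` with `1`). -/
def griFun : ℕ → List (ZMod 2) → List (ZMod 2)
  | _, [] => []
  | k, x :: w => if x = 0 then (if k % 3 = 2 then x :: w else x :: rotFun 1 w)
                 else x :: griFun (k + 1) w

lemma griFun_invol : ∀ (w : List (ZMod 2)) (k : ℕ), griFun k (griFun k w) = w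
  | [], _ => rfl
  | x :: w, k => by
    by_cases h : x = 0
    · by_cases h3 : k % 3 = 2
      · simp [griFun, h, h3]
      · simp only [griFun, if_pos h, if_neg h3]
        cases w with
        | nil => rfl
        | cons y v =>
            have hy : y + 1 + 1 = y := by
              rw [add_assoc]
              simp [show (1 : ZMod 2) + 1 = 0 from rfl]
            simp [rotFun, hy]
    · simp only [griFun, if_neg h]
      rw [griFun_invol w (k + 1)]

/-- The generator `b` of the first Grigorchuk group, with sections `(a, c)`. -/
def griB : Equiv.Perm (List (ZMod 2)) :=
  ⟨griFun 0, griFun 0, fun w => griFun_invol w 0, fun w => griFun_invol w 0⟩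

/-- The generator `c` of the first Grigorchuk group, with sections `(a, d)`. -/
def griC : Equiv.Perm (List (ZMod 2)) :=
  ⟨griFun 1, griFun 1, fun w => griFun_invol w 1, fun w => griFun_invol w 1⟩

/-- The generator `d` of the first Grigorchuk group, with sections `(1, b)`. -/
def griD : Equiv.Perm (List (ZMod 2)) :=
  ⟨griFun 2, griFun 2, fun w => griFun_invol w 2, fun w => griFun_invol w 2⟩

/-- The first Grigorchuk group `𝒢 = ⟨a, b, c, d⟩` acting on the binary tree. -/
def grigorchukGroup : Subgroup (Equiv.Perm (List (ZMod 2))) :=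
  Subgroup.closure {rotPerm 1, griB, griC, griD}

end TreeFract

namespace TreeFract

variable {X : Type*}

lemma Equiv.Perm.apply_inv_self {α : Type*} (e : Equiv.Perm α) (x : α) : e (e⁻¹ x) = x :=
  Equiv.apply_symm_apply e x

lemma Equiv.Perm.inv_apply_self {α : Type*} (e : Equiv.Perm α) (x : α) : e⁻¹ (e x) = x :=
  Equiv.symm_apply_apply e x

lemma mem_AutT_iff {g : Equiv.Perm (List X)} :
    g ∈ AutT X ↔ (g [] = [] ∧ ∀ (u : List X) (x : X), ∃ y : X, g (u ++ [x]) = g u ++ [y]) :=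
  Iff.rfl

lemma autT_exists_append {g : Equiv.Perm (List X)} (hg : g ∈ AutT X) (u v : List X) :
    ∃ w : List X, w.length = v.length ∧ g (u ++ v) = g u ++ w := by
  induction v using List.reverseRecOn with
  | nil => exact ⟨[], rfl, by simp⟩
  | append_singleton v x ih =>
    obtain ⟨w, hw, hw2⟩ := ih
    obtain ⟨y, hy⟩ := hg.2 (u ++ v) x
    refine ⟨w ++ [y], by simp [hw], ?_⟩
    rw [← List.append_assoc, hy, hw2, List.append_assoc]

lemma sectFun_spec {g : Equiv.Perm (List X)} (hg : g ∈ AutT X) (u v : List X) :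
    g (u ++ v) = g u ++ sectFun g u v := by
  obtain ⟨w, hw, hw2⟩ := autT_exists_append hg u v
  have : sectFun g u v = w := by
    simp [sectFun, hw2]
  rw [this, hw2]

lemma sectFun_leftInv {g : Equiv.Perm (List X)} (hg : g ∈ AutT X) (u v : List X) :
    sectFun g⁻¹ (g u) (sectFun g u v) = v := by
  have h1 := sectFun_spec (inv_mem hg) (g u) (sectFun g u v)
  rw [← sectFun_spec hg u v, Equiv.Perm.inv_apply_self, Equiv.Perm.inv_apply_self] at h1
  exact (List.append_cancel_left h1).symm

lemma sectFun_bijective {g : Equiv.Perm (List X)} (hg : g ∈ AutT X) (u : List X) :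
    Function.Bijective (sectFun g u) := by
  have h2 : ∀ v, sectFun g u (sectFun g⁻¹ (g u) v) = v := by
    intro v
    have := sectFun_leftInv (inv_mem hg) (g u) v
    simpa using this
  exact Function.bijective_iff_has_inverse.mpr
    ⟨sectFun g⁻¹ (g u), sectFun_leftInv hg u, h2⟩

lemma sect_apply {g : Equiv.Perm (List X)} (hg : g ∈ AutT X) (u v : List X) :
    sect g u v = sectFun g u v := by
  rw [sect, dif_pos (sectFun_bijective hg u)]
  rfl

lemma sect_spec {g : Equiv.Perm (List X)} (hg : g ∈ AutT X) (u v : List X) :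
    g (u ++ v) = g u ++ sect g u v := by
  rw [sect_apply hg]
  exact sectFun_spec hg u v

lemma sect_mul {f g : Equiv.Perm (List X)} (hf : f ∈ AutT X) (hg : g ∈ AutT X) (u : List X) :
    sect (f * g) u = sect f (g u) * sect g u := by
  refine Equiv.ext fun v => ?_
  have h1 := sect_spec (mul_mem hf hg) u v
  have key : (f * g) u ++ sect (f * g) u v = (f * g) u ++ (sect f (g u) * sect g u) v := by
    rw [← h1]
    show f (g (u ++ v)) = f (g u) ++ sect f (g u) (sect g u v)
    rw [sect_spec hg u v]
    exact sect_spec hf (g u) (sect g u v)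
  exact List.append_cancel_left key

lemma sect_one (u : List X) : sect (1 : Equiv.Perm (List X)) u = 1 := by
  refine Equiv.ext fun v => ?_
  rw [sect_apply (one_mem (AutT X)) u]
  simp [sectFun]

lemma sect_inv {g : Equiv.Perm (List X)} (hg : g ∈ AutT X) (u : List X) :
    sect g⁻¹ (g u) = (sect g u)⁻¹ := by
  have h := sect_mul (inv_mem hg) hg u
  rw [inv_mul_cancel, sect_one] at h
  exact eq_inv_of_mul_eq_one_left h.symm

lemma sect_inv' {g : Equiv.Perm (List X)} (hg : g ∈ AutT X) (u : List X) :
    sect g⁻¹ u = (sect g (g⁻¹ u))⁻¹ := by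
  have h := sect_inv hg (g⁻¹ u)
  rwa [Equiv.Perm.apply_inv_self] at h

lemma sect_mem_AutT {g : Equiv.Perm (List X)} (hg : g ∈ AutT X) (u : List X) :
    sect g u ∈ AutT X := by
  rw [mem_AutT_iff]
  constructor
  · rw [sect_apply hg]
    simp [sectFun]
  · intro w x
    obtain ⟨y, hy⟩ := hg.2 (u ++ w) x
    refine ⟨y, ?_⟩
    have h1 := sect_spec hg u (w ++ [x])
    rw [← List.append_assoc, hy, sect_spec hg u w, List.append_assoc] at h1
    exact (List.append_cancel_left h1).symm

lemma sect_append {g : Equiv.Perm (List X)} (hg : g ∈ AutT X) (u v : List X) :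
    sect g (u ++ v) = sect (sect g u) v := by
  refine Equiv.ext fun w => ?_
  have h : g (u ++ v ++ w) = g (u ++ v) ++ sect g (u ++ v) w := sect_spec hg (u ++ v) w
  rw [List.append_assoc, sect_spec hg u (v ++ w),
    sect_spec (sect_mem_AutT hg u) v w, sect_spec hg u v, List.append_assoc] at h
  exact (List.append_cancel_left (List.append_cancel_left h)).symm

lemma sect_nil {g : Equiv.Perm (List X)} (hg : g ∈ AutT X) : sect g [] = g := by
  refine Equiv.ext fun v => ?_
  rw [sect_apply hg]
  simp [sectFun, hg.1]

section HanoiLemmas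

variable {d : ℕ}

lemma hanoiA_coe (i j : Fin d) (w : List (Fin d)) : hanoiA i j w = hanoiFun i j w := rfl

lemma hanoiFun_append_single (i j : Fin d) (u : List (Fin d)) (x : Fin d) :
    ∃ y, hanoiFun i j (u ++ [x]) = hanoiFun i j u ++ [y] := by
  induction u with
  | nil =>
    refine ⟨if x = i then j else if x = j then i else x, ?_⟩
    simp only [List.nil_append, hanoiFun]
    split_ifs <;> rfl
  | cons z u ih =>
    by_cases h1 : z = i
    · exact ⟨x, by simp [hanoiFun, h1]⟩
    · by_cases h2 : z = j
      · refine ⟨x, ?_⟩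
        simp only [List.cons_append, hanoiFun, h1, h2, if_false, if_true]
        split_ifs <;> simp
      · obtain ⟨y, hy⟩ := ih
        exact ⟨y, by simp [hanoiFun, h1, h2, hy]⟩

lemma hanoiA_mem (i j : Fin d) : hanoiA i j ∈ AutT (Fin d) := by
  rw [mem_AutT_iff]
  exact ⟨rfl, fun u x => hanoiFun_append_single i j u x⟩

lemma hanoiFun_cases (i j : Fin d) :
    ∀ u : List (Fin d),
      (∀ v, hanoiFun i j (u ++ v) = hanoiFun i j u ++ v) ∨
      (hanoiFun i j u = u ∧ ∀ v, hanoiFun i j (u ++ v) = u ++ hanoiFun i j v)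
  | [] => Or.inr ⟨rfl, fun _ => rfl⟩
  | z :: u => by
    by_cases h1 : z = i
    · exact Or.inl fun v => by simp [hanoiFun, h1]
    · by_cases h2 : z = j
      · refine Or.inl fun v => ?_
        simp only [List.cons_append, hanoiFun, h1, h2, if_false, if_true]
        split_ifs <;> simp
      · rcases hanoiFun_cases i j u with h | ⟨h0, h⟩
        · exact Or.inl fun v => by simp [hanoiFun, h1, h2, h v]
        · exact Or.inr ⟨by simp [hanoiFun, h1, h2, h0],
            fun v => by simp [hanoiFun, h1, h2, h v]⟩

lemma sect_hanoiA (i j : Fin d) (u : List (Fin d)) :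
    sect (hanoiA i j) u = 1 ∨ sect (hanoiA i j) u = hanoiA i j := by
  rcases hanoiFun_cases i j u with h | ⟨h0, h⟩
  · left
    refine Equiv.ext fun v => ?_
    rw [sect_apply (hanoiA_mem i j)]
    have h' : hanoiA i j (u ++ v) = hanoiA i j u ++ v := h v
    simp [sectFun, h']
  · right
    refine Equiv.ext fun v => ?_
    rw [sect_apply (hanoiA_mem i j)]
    have h' : hanoiA i j (u ++ v) = u ++ hanoiA i j v := h v
    have h0' : hanoiA i j u = u := h0
    simp [sectFun, h', h0']

lemma hanoiA_fixes {i j x : Fin d} (hx1 : x ≠ i) (hx2 : x ≠ j) : hanoiA i j [x] = [x] := by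
  simp [hanoiA_coe, hanoiFun, hx1, hx2]

lemma sect_hanoiA_of_ne {i j x : Fin d} (hx1 : x ≠ i) (hx2 : x ≠ j) :
    sect (hanoiA i j) [x] = hanoiA i j := by
  refine Equiv.ext fun v => ?_
  rw [sect_apply (hanoiA_mem i j)]
  have h' : hanoiA i j (x :: v) = x :: hanoiA i j v := by
    simp [hanoiA_coe, hanoiFun, hx1, hx2]
  simp [sectFun, h', hanoiA_fixes hx1 hx2]

lemma hanoiA_swap (i j : Fin d) : hanoiA i j [i] = [j] := by
  simp [hanoiA_coe, hanoiFun]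

lemma sect_hanoiA_self (i j : Fin d) : sect (hanoiA i j) [i] = 1 := by
  refine Equiv.ext fun v => ?_
  rw [sect_apply (hanoiA_mem i j)]
  have h' : hanoiA i j (i :: v) = j :: v := by
    simp [hanoiA_coe, hanoiFun]
  simp [sectFun, h', hanoiA_swap i j]

lemma hanoiB_mem (i : ℕ) (h : i + 1 < d) : hanoiB d i h ∈ hanoiGroup d :=
  Subgroup.subset_closure ⟨i, h, rfl⟩

lemma hanoiGroup_le_AutT : hanoiGroup d ≤ AutT (Fin d) := by
  rw [hanoiGroup, Subgroup.closure_le]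
  rintro g ⟨i, h, rfl⟩
  exact hanoiA_mem _ _

lemma hanoi_selfSimilar : SelfSimilar (hanoiGroup d) := by
  intro g hg
  induction hg using Subgroup.closure_induction with
  | mem x hx =>
    obtain ⟨i, h, rfl⟩ := hx
    intro u
    rcases sect_hanoiA ⟨i, Nat.lt_of_succ_lt h⟩ ⟨i + 1, h⟩ u with h' | h'
    · rw [hanoiB, h']; exact one_mem _
    · rw [hanoiB, h']; exact hanoiB_mem i h
  | one => intro u; rw [sect_one]; exact one_mem _
  | mul x y hx hy ihx ihy =>
    intro u
    rw [sect_mul (hanoiGroup_le_AutT hx) (hanoiGroup_le_AutT hy)]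
    exact mul_mem (ihx _) (ihy _)
  | inv x hx ihx =>
    intro u
    rw [sect_inv' (hanoiGroup_le_AutT hx)]
    exact inv_mem (ihx _)

lemma hanoi_move (x y : Fin d) :
    ∃ h ∈ hanoiGroup d, h [x] = [y] ∧ sect h [x] = 1 := by
  suffices H : ∀ n (x y : Fin d), (y : ℕ) = (x : ℕ) + n →
      ∃ h ∈ hanoiGroup d, h [x] = [y] ∧ sect h [x] = 1 by
    rcases le_or_gt (x : ℕ) (y : ℕ) with hle | hlt
    · exact H ((y : ℕ) - (x : ℕ)) x y (by omega)
    · obtain ⟨h, hmem, h1, h2⟩ := H ((x : ℕ) - (y : ℕ)) y x (by omega)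
      refine ⟨h⁻¹, inv_mem hmem, ?_, ?_⟩
      · rw [← h1, Equiv.Perm.inv_apply_self]
      · have h3 := sect_inv (hanoiGroup_le_AutT hmem) [y]
        rw [h1, h2] at h3
        simpa using h3
  intro n
  induction n with
  | zero =>
    intro x y hxy
    have : y = x := Fin.ext (by omega)
    subst this
    exact ⟨1, one_mem _, rfl, sect_one _⟩
  | succ n ih =>
    intro x y hxy
    have hlt : (x : ℕ) + n + 1 < d := by omega
    obtain ⟨h, hmem, h1, h2⟩ := ih x ⟨(x : ℕ) + n, by omega⟩ rfl
    refine ⟨hanoiB d ((x : ℕ) + n) hlt * h, mul_mem (hanoiB_mem _ hlt) hmem, ?_, ?_⟩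
    · show hanoiB d ((x : ℕ) + n) hlt (h [x]) = [y]
      rw [h1]
      have hs : hanoiB d ((x : ℕ) + n) hlt [⟨(x : ℕ) + n, by omega⟩] =
          [(⟨(x : ℕ) + n + 1, hlt⟩ : Fin d)] := hanoiA_swap _ _
      rw [hs]
      congr 1
      exact Fin.ext (by simp; omega)
    · rw [sect_mul (hanoiGroup_le_AutT (hanoiB_mem _ hlt)) (hanoiGroup_le_AutT hmem), h1, h2,
        mul_one]
      exact sect_hanoiA_self _ _

lemma hanoi_fractal_gen (hd : 3 ≤ d) (i : ℕ) (h : i + 1 < d) (x : Fin d) :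
    ∃ f ∈ hanoiGroup d, f [x] = [x] ∧ sect f [x] = hanoiB d i h := by
  obtain ⟨y, hy1, hy2⟩ :
      ∃ y : Fin d, y ≠ ⟨i, Nat.lt_of_succ_lt h⟩ ∧ y ≠ ⟨i + 1, h⟩ := by
    by_cases hi : i = 0
    · exact ⟨⟨2, by omega⟩, Fin.ne_of_val_ne (show (2 : ℕ) ≠ i by omega),
        Fin.ne_of_val_ne (show (2 : ℕ) ≠ i + 1 by omega)⟩
    · exact ⟨⟨0, by omega⟩, Fin.ne_of_val_ne (show (0 : ℕ) ≠ i by omega),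
        Fin.ne_of_val_ne (show (0 : ℕ) ≠ i + 1 by omega)⟩
  obtain ⟨k, hk, hk1, hk2⟩ := hanoi_move x y
  have hbmem := hanoiB_mem i h
  have hbk : (hanoiB d i h * k) [x] = [y] := by
    show hanoiB d i h (k [x]) = [y]
    rw [hk1]
    exact hanoiA_fixes hy1 hy2
  refine ⟨k⁻¹ * (hanoiB d i h * k), mul_mem (inv_mem hk) (mul_mem hbmem hk), ?_, ?_⟩
  · show k⁻¹ ((hanoiB d i h * k) [x]) = [x]
    rw [hbk, ← hk1, Equiv.Perm.inv_apply_self]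
  · rw [sect_mul (inv_mem (hanoiGroup_le_AutT hk))
      (mul_mem (hanoiGroup_le_AutT hbmem) (hanoiGroup_le_AutT hk)), hbk,
      sect_mul (hanoiGroup_le_AutT hbmem) (hanoiGroup_le_AutT hk), hk1, hk2, mul_one]
    have hki : sect k⁻¹ [y] = 1 := by
      have h3 := sect_inv (hanoiGroup_le_AutT hk) [x]
      rw [hk1, hk2] at h3
      simpa using h3
    rw [hki, one_mul, hanoiB, sect_hanoiA_of_ne hy1 hy2]

lemma hanoi_fractal_level1 (hd : 3 ≤ d) :
    ∀ g ∈ hanoiGroup d, ∀ x : Fin d,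
      ∃ f ∈ hanoiGroup d, f [x] = [x] ∧ sect f [x] = g := by
  intro g hg
  induction hg using Subgroup.closure_induction with
  | mem g hgen =>
    obtain ⟨i, h, rfl⟩ := hgen
    exact hanoi_fractal_gen hd i h
  | one => exact fun x => ⟨1, one_mem _, rfl, sect_one _⟩
  | mul g1 g2 h1 h2 ih1 ih2 =>
    intro x
    obtain ⟨f1, hf1, hf1x, hf1s⟩ := ih1 x
    obtain ⟨f2, hf2, hf2x, hf2s⟩ := ih2 x
    refine ⟨f1 * f2, mul_mem hf1 hf2, ?_, ?_⟩
    · show f1 (f2 [x]) = [x]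
      rw [hf2x, hf1x]
    · rw [sect_mul (hanoiGroup_le_AutT hf1) (hanoiGroup_le_AutT hf2), hf2x, hf1s, hf2s]
  | inv g hgm ih =>
    intro x
    obtain ⟨f, hf, hfx, hfs⟩ := ih x
    have hinv : f⁻¹ [x] = [x] := by
      apply f.injective
      rw [Equiv.Perm.apply_inv_self, hfx]
    refine ⟨f⁻¹, inv_mem hf, hinv, ?_⟩
    rw [sect_inv' (hanoiGroup_le_AutT hf), hinv, hfs]

lemma hanoi_fractal_all (hd : 3 ≤ d) (u : List (Fin d)) :
    ∀ g ∈ hanoiGroup d, ∃ f ∈ hanoiGroup d, f u = u ∧ sect f u = g := by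
  induction u with
  | nil =>
    intro g hg
    exact ⟨g, hg, (hanoiGroup_le_AutT hg).1, sect_nil (hanoiGroup_le_AutT hg)⟩
  | cons x u ih =>
    intro g hg
    obtain ⟨h, hh, hhu, hhs⟩ := ih g hg
    obtain ⟨f, hf, hfx, hfs⟩ := hanoi_fractal_level1 hd h hh x
    refine ⟨f, hf, ?_, ?_⟩
    · show f ([x] ++ u) = x :: u
      rw [sect_spec (hanoiGroup_le_AutT hf) [x] u, hfx, hfs, hhu]
      rfl
    · show sect f ([x] ++ u) = g
      rw [sect_append (hanoiGroup_le_AutT hf) [x] u, hfs, hhs]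

end HanoiLemmas

end TreeFract

namespace TreeFract

/-- For every `d ≥ 3`, the subgroup `G = ⟨b_1, …, b_{d-1}⟩` of the
Hanoi Towers group is self-similar, fractal and level transitive. -/
theorem hanoiGroup_selfSimilar_fractal_levelTransitive (d : ℕ) (hd : 3 ≤ d) :
    SelfSimilar (hanoiGroup d) ∧ Fractal (hanoiGroup d) ∧ LevelTransitive (hanoiGroup d) := by
  refine ⟨hanoi_selfSimilar, ?_, ?_⟩
  · intro u
    ext g
    constructor
    · rintro ⟨f, hf, rfl⟩
      exact hanoi_selfSimilar f hf.1 u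
    · intro hg
      obtain ⟨f, hf, hfu, hfs⟩ := hanoi_fractal_all hd u g hg
      exact ⟨f, ⟨hf, hfu⟩, hfs⟩
  · intro n
    induction n with
    | zero =>
      intro u v hu hv
      rw [List.length_eq_zero_iff] at hu hv
      subst hu; subst hv
      exact ⟨1, one_mem _, rfl⟩
    | succ n ih =>
      intro u v hu hv
      obtain ⟨x, u', rfl⟩ : ∃ x u'', u = x :: u'' := by
        cases u with
        | nil => simp at hu
        | cons a b => exact ⟨a, b, rfl⟩
      obtain ⟨y, v', rfl⟩ : ∃ y v'', v = y :: v'' := by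
        cases v with
        | nil => simp at hv
        | cons a b => exact ⟨a, b, rfl⟩
      obtain ⟨g, hg, hgu⟩ := ih u' v' (by simpa using hu) (by simpa using hv)
      obtain ⟨f, hf, hfx, hfs⟩ := hanoi_fractal_level1 hd g hg x
      obtain ⟨k, hk, hk1, hk2⟩ := hanoi_move x y
      refine ⟨k * f, mul_mem hk hf, ?_⟩
      have h1 : f (x :: u') = x :: v' := by
        show f ([x] ++ u') = x :: v'
        rw [sect_spec (hanoiGroup_le_AutT hf) [x] u', hfx, hfs, hgu]
        rfl
      show k (f (x :: u')) = y :: v'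
      rw [h1]
      show k ([x] ++ v') = y :: v'
      rw [sect_spec (hanoiGroup_le_AutT hk) [x] v', hk1, hk2]
      simp

end TreeFract
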